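/- arXiv:cs/9908010 — 2 statements merged into one kernel-verified Lean document; each statement's English description precedes it below -/
import Mathlib

section
/- Let t, n, F be positive integers with n ≥ 2, and set r = ⌈(8t + 128·log n)/F⌉. If in each round a fixed replica receives a number of new updates distributed Binomial(m, F/n) with m ≥ n/4, independently across rounds, then the probability that the total number of new updates over r rounds is less than t is at most 1/n². By a union bound over at most n replicas, with probability ≥ 1 − 1/n every replica receives at least t new updates within r rounds. -/
/-- Last stage of the Random algorithm: with `r = ⌈(8t + 128 log n)/F⌉`
rounds, per-round receipts `Binomial(m_i, F/n)` with `m_i ≥ n/4` summing to a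
`Binomial(M, F/n)` total with `M ≥ r n / 4`, the probability that fewer than
`t` new updates arrive is at most `1/n²`; and `n` times this tail (union bound
over the `n` replicas) is at most `1/n`. -/
theorem random_last_stage (n t F M : ℕ)
    (hn : 2 ≤ n) (ht : 0 < t) (hF : 0 < F) (hFn : F ≤ n)
    (hM : ((⌈(8 * (t : ℝ) + 128 * Real.log n) / (F : ℝ)⌉₊ : ℝ) * (n : ℝ)) / 4 ≤ (M : ℝ)) :
    (∑ i ∈ Finset.range t,
        (M.choose i : ℝ) * ((F : ℝ) / (n : ℝ)) ^ i * (1 - (F : ℝ) / (n : ℝ)) ^ (M - i))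
      ≤ 1 / (n : ℝ) ^ 2 ∧
    (n : ℝ) *
      (∑ i ∈ Finset.range t,
        (M.choose i : ℝ) * ((F : ℝ) / (n : ℝ)) ^ i * (1 - (F : ℝ) / (n : ℝ)) ^ (M - i))
      ≤ 1 / (n : ℝ) := by
  have hn0 : (0:ℝ) < (n:ℝ) := by exact_mod_cast (show 0 < n by omega)
  have hF0 : (0:ℝ) < (F:ℝ) := by exact_mod_cast hF
  set p : ℝ := (F : ℝ) / (n : ℝ) with hpdef
  have hp0 : 0 ≤ p := by positivity
  have hp1 : p ≤ 1 := by
    rw [hpdef]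
    exact div_le_one_of_le₀ (by exact_mod_cast hFn) hn0.le
  have h1p : (0:ℝ) ≤ 1 - p := by linarith
  have hhalf : (0:ℝ) ≤ 1 - p / 2 := by linarith
  set S : ℝ := ∑ i ∈ Finset.range t,
      (M.choose i : ℝ) * p ^ i * (1 - p) ^ (M - i) with hSdef
  -- termwise comparison with tilted terms
  have h1 : S ≤ 2 ^ t * ∑ i ∈ Finset.range t,
      (M.choose i : ℝ) * (p / 2) ^ i * (1 - p) ^ (M - i) := by
    rw [Finset.mul_sum]
    apply Finset.sum_le_sum
    intro i hi
    have hit : i < t := Finset.mem_range.mp hi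
    have hpi : p ^ i = 2 ^ i * (p / 2) ^ i := by
      rw [← mul_pow]; ring_nf
    have hnn : 0 ≤ (M.choose i : ℝ) * (p / 2) ^ i * (1 - p) ^ (M - i) := by positivity
    have h2 : (2:ℝ) ^ i ≤ 2 ^ t := pow_le_pow_right₀ one_le_two hit.le
    calc (M.choose i : ℝ) * p ^ i * (1 - p) ^ (M - i)
        = 2 ^ i * ((M.choose i : ℝ) * (p / 2) ^ i * (1 - p) ^ (M - i)) := by
          rw [hpi]; ring
      _ ≤ 2 ^ t * ((M.choose i : ℝ) * (p / 2) ^ i * (1 - p) ^ (M - i)) :=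
          mul_le_mul_of_nonneg_right h2 hnn
  -- complete the binomial sum
  have h2 : ∑ i ∈ Finset.range t, (M.choose i : ℝ) * (p / 2) ^ i * (1 - p) ^ (M - i)
      ≤ (1 - p / 2) ^ M := by
    have hsub : ∑ i ∈ Finset.range t, (M.choose i : ℝ) * (p / 2) ^ i * (1 - p) ^ (M - i)
        ≤ ∑ i ∈ Finset.range (max t (M + 1)),
            (M.choose i : ℝ) * (p / 2) ^ i * (1 - p) ^ (M - i) := by
      apply Finset.sum_le_sum_of_subset_of_nonneg
      · exact Finset.range_subset_range.mpr (le_max_left _ _)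
      · intro i _ _; positivity
    have heq : ∑ i ∈ Finset.range (max t (M + 1)),
          (M.choose i : ℝ) * (p / 2) ^ i * (1 - p) ^ (M - i)
        = ∑ i ∈ Finset.range (M + 1),
            (M.choose i : ℝ) * (p / 2) ^ i * (1 - p) ^ (M - i) := by
      symm
      apply Finset.sum_subset (Finset.range_subset_range.mpr (le_max_right _ _))
      intro i _ hi
      have : M < i := by
        have := Finset.mem_range.not.mp hi
        omega
      rw [Nat.choose_eq_zero_of_lt this]
      simp
    have hbin : ∑ i ∈ Finset.range (M + 1),
          (M.choose i : ℝ) * (p / 2) ^ i * (1 - p) ^ (M - i)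
        = (p / 2 + (1 - p)) ^ M := by
      rw [add_pow]
      apply Finset.sum_congr rfl
      intro i _; ring
    have : (p / 2 + (1 - p)) = 1 - p / 2 := by ring
    rw [heq, hbin, this] at hsub
    exact hsub
  -- exponential bounds
  have h3 : (1 - p / 2) ^ M ≤ Real.exp (-(p / 2)) ^ M := by
    apply pow_le_pow_left₀ hhalf
    have := Real.add_one_le_exp (-(p / 2))
    linarith
  have hexp1 : Real.exp (-(p / 2)) ^ M = Real.exp (-(↑M * p / 2)) := by
    rw [← Real.exp_nat_mul]; ring_nf
  have hexp2 : (2:ℝ) ^ t = Real.exp (↑t * Real.log 2) := by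
    rw [show (2:ℝ) = Real.exp (Real.log 2) from (Real.exp_log two_pos).symm,
      ← Real.exp_nat_mul, Real.log_exp]
  -- the mean bound: M * p ≥ 2t + 32 log n
  have hlogn : 0 ≤ Real.log n := Real.log_nonneg (by exact_mod_cast (show 1 ≤ n by omega))
  have hmean : 2 * (t:ℝ) + 32 * Real.log n ≤ ↑M * p := by
    set r : ℕ := ⌈(8 * (t : ℝ) + 128 * Real.log n) / (F : ℝ)⌉₊ with hrdef
    have hceil : (8 * (t : ℝ) + 128 * Real.log n) / (F : ℝ) ≤ (r : ℝ) := Nat.le_ceil _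
    have hrF : 8 * (t : ℝ) + 128 * Real.log n ≤ (r : ℝ) * F := by
      rw [div_le_iff₀ hF0] at hceil
      linarith
    have hMp : (r : ℝ) * F / 4 ≤ ↑M * p := by
      have : ((r : ℝ) * n / 4) * p = (r : ℝ) * F / 4 := by
        rw [hpdef]; field_simp
      calc (r : ℝ) * F / 4 = ((r : ℝ) * n / 4) * p := this.symm
        _ ≤ ↑M * p := mul_le_mul_of_nonneg_right hM hp0
    linarith
  have hlog2 : Real.log 2 ≤ 1 := by
    have := Real.log_two_lt_d9
    linarith
  have ht0 : (0:ℝ) ≤ (t:ℝ) := by positivity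
  -- assemble
  have hfinal : S ≤ 1 / (n:ℝ) ^ 2 := by
    have hS2 : S ≤ Real.exp (↑t * Real.log 2) * Real.exp (-(↑M * p / 2)) := by
      calc S ≤ 2 ^ t * ∑ i ∈ Finset.range t,
            (M.choose i : ℝ) * (p / 2) ^ i * (1 - p) ^ (M - i) := h1
        _ ≤ 2 ^ t * (1 - p / 2) ^ M :=
            mul_le_mul_of_nonneg_left h2 (by positivity)
        _ ≤ 2 ^ t * Real.exp (-(p / 2)) ^ M :=
            mul_le_mul_of_nonneg_left h3 (by positivity)
        _ = Real.exp (↑t * Real.log 2) * Real.exp (-(↑M * p / 2)) := by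
            rw [hexp2, hexp1]
    rw [← Real.exp_add] at hS2
    have hbound : Real.exp (↑t * Real.log 2 + -(↑M * p / 2)) ≤ Real.exp (-(2 * Real.log n)) := by
      apply Real.exp_le_exp.mpr
      have htlog : (t:ℝ) * Real.log 2 ≤ (t:ℝ) := by
        nlinarith
      linarith
    have hexpn : Real.exp (-(2 * Real.log n)) = 1 / (n:ℝ) ^ 2 := by
      rw [Real.exp_neg, two_mul, Real.exp_add, Real.exp_log hn0]
      rw [one_div, sq]
    linarith [hS2, hbound.trans_eq hexpn]
  constructor
  · exact hfinal
  · have h4 : (n:ℝ) * S ≤ (n:ℝ) * (1 / (n:ℝ) ^ 2) :=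
      mul_le_mul_of_nonneg_left hfinal hn0.le
    have : (n:ℝ) * (1 / (n:ℝ) ^ 2) = 1 / (n:ℝ) := by
      field_simp
    linarith
end

section
/- Combining the pieces of Theorem 2: let n, t, α, F^in, D be positive reals with t ≥ 2·log₂ n, α ≤ n, and suppose every replica hears from at most M = 10·D·F^in distinct senders within D rounds. If D ≤ (1/2)·n·t/(10·e·F^in·α), then there exists an initial α-subset I of the n replicas such that no replica outside I hears from t or more members of I within D rounds; consequently no new replica can become active, so any diffusion protocol with D-amortized fan-in F^in has expected delay D satisfying D·F^in = Ω(t·n/α). -/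
open Finset

lemma aux_choose_mul_pow_le (m t : ℕ) :
    (m.choose t : ℝ) * (t : ℝ) ^ t ≤ ((m : ℝ) * Real.exp 1) ^ t := by
  have ht0 : (0:ℝ) < t.factorial := by exact_mod_cast t.factorial_pos
  have h1 : (m.choose t : ℝ) ≤ (m : ℝ) ^ t / t.factorial := by
    rw [le_div_iff₀ ht0]
    have := Nat.descFactorial_le_pow m t
    rw [Nat.descFactorial_eq_factorial_mul_choose] at this
    calc (m.choose t : ℝ) * t.factorial = ((t.factorial * m.choose t : ℕ) : ℝ) := by
          push_cast; ring
      _ ≤ ((m ^ t : ℕ) : ℝ) := by exact_mod_cast this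
      _ = (m : ℝ) ^ t := by push_cast; ring
  have h2 : (t : ℝ) ^ t / t.factorial ≤ Real.exp 1 ^ t := by
    have h := Real.pow_div_factorial_le_exp (x := (t : ℝ)) (by positivity) t
    rwa [← Real.exp_one_pow] at h
  calc (m.choose t : ℝ) * (t : ℝ) ^ t
      ≤ ((m : ℝ) ^ t / t.factorial) * (t : ℝ) ^ t := by
        apply mul_le_mul_of_nonneg_right h1 (by positivity)
    _ = (m : ℝ) ^ t * ((t : ℝ) ^ t / t.factorial) := by ring
    _ ≤ (m : ℝ) ^ t * Real.exp 1 ^ t := by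
        apply mul_le_mul_of_nonneg_left h2 (by positivity)
    _ = ((m : ℝ) * Real.exp 1) ^ t := (mul_pow _ _ _).symm

lemma aux_descFactorial_ratio (t : ℕ) {a n : ℕ} (h : a ≤ n) :
    a.descFactorial t * n ^ t ≤ n.descFactorial t * a ^ t := by
  induction t with
  | zero => simp
  | succ t ih =>
    rw [Nat.descFactorial_succ, Nat.descFactorial_succ, pow_succ, pow_succ]
    have key : (a - t) * n ≤ (n - t) * a := by
      rcases Nat.le_total a t with h1 | h1
      · simp [Nat.sub_eq_zero_of_le h1]
      · rw [Nat.sub_mul, Nat.sub_mul, mul_comm a n]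
        have h2 : t * a ≤ t * n := Nat.mul_le_mul_left t h
        omega
    calc (a - t) * a.descFactorial t * (n ^ t * n)
        = ((a - t) * n) * (a.descFactorial t * n ^ t) := by ring
      _ ≤ ((n - t) * a) * (n.descFactorial t * a ^ t) := Nat.mul_le_mul key ih
      _ = (n - t) * n.descFactorial t * (a ^ t * a) := by ring

lemma aux_choose_ratio (t : ℕ) {a n : ℕ} (h : a ≤ n) :
    a.choose t * n ^ t ≤ n.choose t * a ^ t := by
  have H := aux_descFactorial_ratio t h
  rw [Nat.descFactorial_eq_factorial_mul_choose, Nat.descFactorial_eq_factorial_mul_choose] at H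
  apply Nat.le_of_mul_le_mul_left _ (Nat.factorial_pos t)
  calc t.factorial * (a.choose t * n ^ t) = t.factorial * a.choose t * n ^ t := by ring
    _ ≤ t.factorial * n.choose t * a ^ t := H
    _ = t.factorial * (n.choose t * a ^ t) := by ring

lemma aux_key (n t α m : ℕ) (ht : 0 < t) (hta : t ≤ α) (hαn : α ≤ n) (hn0 : 0 < n) :
    (m.choose t : ℝ) * ((n - t).choose (α - t) : ℝ)
      ≤ (n.choose α : ℝ) * (((m : ℝ) * (α : ℝ) * Real.exp 1) / ((t : ℝ) * (n : ℝ))) ^ t := by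
  have htR : (0:ℝ) < t := by exact_mod_cast ht
  have hnR : (0:ℝ) < n := by exact_mod_cast hn0
  have htn : (0:ℝ) < (t : ℝ) * n := by positivity
  have hCnt : (0:ℝ) < (n.choose t : ℝ) := by
    exact_mod_cast Nat.choose_pos (hta.trans hαn)
  have hidR : (n.choose α : ℝ) * (α.choose t : ℝ)
      = (n.choose t : ℝ) * ((n - t).choose (α - t) : ℝ) := by
    exact_mod_cast congrArg (Nat.cast : ℕ → ℝ) (Nat.choose_mul (n := n) hta)
  have hiv : (α.choose t : ℝ) * (n : ℝ) ^ t ≤ (n.choose t : ℝ) * (α : ℝ) ^ t := by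
    exact_mod_cast aux_choose_ratio t hαn
  have H : ((m.choose t : ℝ) * ((n - t).choose (α - t) : ℝ)) * ((t : ℝ) * n) ^ t
        * (n.choose t : ℝ)
      ≤ ((n.choose α : ℝ) * ((m : ℝ) * α * Real.exp 1) ^ t) * (n.choose t : ℝ) := by
    have e1 : ((m.choose t : ℝ) * ((n - t).choose (α - t) : ℝ)) * ((t : ℝ) * n) ^ t
          * (n.choose t : ℝ)
        = (n.choose α : ℝ) * (((m.choose t : ℝ) * (t : ℝ) ^ t)
            * ((α.choose t : ℝ) * (n : ℝ) ^ t)) := by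
      rw [mul_pow]
      linear_combination (-((m.choose t : ℝ) * (t : ℝ) ^ t * (n : ℝ) ^ t)) * hidR
    rw [e1]
    calc (n.choose α : ℝ) * (((m.choose t : ℝ) * (t : ℝ) ^ t)
            * ((α.choose t : ℝ) * (n : ℝ) ^ t))
        ≤ (n.choose α : ℝ) * ((((m : ℝ) * Real.exp 1) ^ t)
            * ((n.choose t : ℝ) * (α : ℝ) ^ t)) := by
          apply mul_le_mul_of_nonneg_left _ (by positivity)
          exact mul_le_mul (aux_choose_mul_pow_le m t) hiv (by positivity) (by positivity)
      _ = ((n.choose α : ℝ) * ((m : ℝ) * α * Real.exp 1) ^ t) * (n.choose t : ℝ) := by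
          rw [mul_pow, mul_pow]; ring
  have H2 := le_of_mul_le_mul_right H hCnt
  rw [div_pow, mul_div_assoc', le_div_iff₀ (pow_pos htn t)]
  exact H2

lemma aux_half_pow (n t : ℕ) (hn : 2 ≤ n) (hlog : 2 * Real.logb 2 n ≤ (t : ℝ)) :
    ((1 : ℝ) / 2) ^ t ≤ 1 / (n : ℝ) ^ 2 := by
  have hn0 : (0 : ℝ) < n := by exact_mod_cast Nat.lt_of_lt_of_le (by norm_num) hn
  have h2 : ((n : ℝ)) ^ 2 ≤ (2 : ℝ) ^ t := by
    have key : ((n : ℝ)) ^ 2 = (2 : ℝ) ^ ((2 : ℝ) * Real.logb 2 n) := by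
      rw [mul_comm, Real.rpow_mul (by norm_num : (0:ℝ) ≤ 2),
        Real.rpow_logb (by norm_num) (by norm_num) hn0]
      norm_num [Real.rpow_natCast (n : ℝ) 2]
    rw [key, ← Real.rpow_natCast 2 t]
    exact (Real.rpow_le_rpow_left_iff (by norm_num : (1:ℝ) < 2)).mpr hlog
  rw [div_pow, one_pow]
  apply one_div_le_one_div_of_le (by positivity) h2

lemma aux_card_superset_le {n t α : ℕ} (T : Finset (Fin n)) (hT : T.card = t) :
    (((Finset.univ : Finset (Fin n)).powersetCard α).filter (fun I => T ⊆ I)).card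
      ≤ (n - t).choose (α - t) := by
  classical
  have hle : (((Finset.univ : Finset (Fin n)).powersetCard α).filter (fun I => T ⊆ I)).card
      ≤ ((Finset.univ \ T).powersetCard (α - t)).card := by
    apply card_le_card_of_injOn (fun I => I \ T)
    · intro I hI
      simp only [mem_coe, mem_filter, mem_powersetCard] at hI
      obtain ⟨⟨-, hcard⟩, hsub⟩ := hI
      simp only [mem_coe, mem_powersetCard]
      exact ⟨sdiff_subset_sdiff (subset_univ I) Subset.rfl,
        by rw [card_sdiff_of_subset hsub, hcard, hT]⟩
    · intro I1 h1 I2 h2 heq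
      simp only [coe_filter, Set.mem_setOf_eq, mem_coe] at h1 h2
      have e1 : I1 = I1 \ T ∪ T := (sdiff_union_of_subset h1.2).symm
      have e2 : I2 = I2 \ T ∪ T := (sdiff_union_of_subset h2.2).symm
      rw [e1, e2]; simp only at heq; rw [heq]
  rw [card_powersetCard, card_sdiff_of_subset (subset_univ T), card_univ, Fintype.card_fin, hT] at hle
  exact hle

lemma aux_bad_card_le {n t α : ℕ} (Sj : Finset (Fin n)) :
    ((((Finset.univ : Finset (Fin n)).powersetCard α)).filter
        (fun I => t ≤ (Sj ∩ I).card)).card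
      ≤ Sj.card.choose t * (n - t).choose (α - t) := by
  classical
  have hsub : (((Finset.univ : Finset (Fin n)).powersetCard α)).filter
        (fun I => t ≤ (Sj ∩ I).card)
      ⊆ (Sj.powersetCard t).biUnion
          (fun T => ((Finset.univ : Finset (Fin n)).powersetCard α).filter (fun I => T ⊆ I)) := by
    intro I hI
    simp only [mem_filter] at hI
    obtain ⟨T, hT1, hT2⟩ := Finset.exists_subset_card_eq hI.2
    simp only [mem_biUnion, mem_powersetCard, mem_filter] at hI ⊢
    exact ⟨T, ⟨hT1.trans inter_subset_left, hT2⟩, hI.1, hT1.trans inter_subset_right⟩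
  calc (((Finset.univ : Finset (Fin n)).powersetCard α).filter
        (fun I => t ≤ (Sj ∩ I).card)).card
      ≤ ((Sj.powersetCard t).biUnion
          (fun T => ((Finset.univ : Finset (Fin n)).powersetCard α).filter
            (fun I => T ⊆ I))).card := card_le_card hsub
    _ ≤ ∑ T ∈ Sj.powersetCard t,
          (((Finset.univ : Finset (Fin n)).powersetCard α).filter (fun I => T ⊆ I)).card :=
        card_biUnion_le
    _ ≤ ∑ _T ∈ Sj.powersetCard t, (n - t).choose (α - t) := by
        apply sum_le_sum
        intro T hT
        exact aux_card_superset_le T (mem_powersetCard.mp hT).2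
    _ = (Sj.powersetCard t).card * (n - t).choose (α - t) := by rw [sum_const, smul_eq_mul]
    _ = Sj.card.choose t * (n - t).choose (α - t) := by rw [card_powersetCard]

/-- Core of the delay/fan-in tradeoff (Theorem 2): `n` replicas, threshold
`t ≥ 2 log₂ n`; each replica `j` hears from a set `S_j` of at most
`10 D Fin` distinct senders within `D` rounds.  If
`10 D Fin α e / (t n) ≤ 1/2`, then for a uniformly random `α`-subset `I` of
the replicas, with probability at least `1 - 1/n` every `j` satisfies
`|S_j ∩ I| < t`; in particular some initial `α`-set `I` activates no new
replica within `D` rounds (forcing `D · Fin = Ω(t n / α)`). -/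
theorem delay_fan_in_tradeoff_core (n t α : ℕ) (D Fi : ℝ)
    (hn : 2 ≤ n) (ht : 0 < t) (hα : 0 < α) (hαn : α ≤ n)
    (hD : 0 < D) (hFi : 0 < Fi)
    (hlog : 2 * Real.logb 2 n ≤ (t : ℝ))
    (S : Fin n → Finset (Fin n))
    (hS : ∀ j : Fin n, ((S j).card : ℝ) ≤ 10 * D * Fi)
    (hsmall : 10 * D * Fi * (α : ℝ) * Real.exp 1 / ((t : ℝ) * (n : ℝ)) ≤ 1 / 2) :
    1 - 1 / (n : ℝ) ≤
      ((((Finset.univ : Finset (Fin n)).powersetCard α).filter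
          (fun I => ∀ j : Fin n, (S j ∩ I).card < t)).card : ℝ) / (n.choose α : ℝ) ∧
    ∃ I : Finset (Fin n), I.card = α ∧ ∀ j : Fin n, (S j ∩ I).card < t := by
  have hn0 : 0 < n := lt_of_lt_of_le (by norm_num) hn
  have hnR : (0:ℝ) < n := by exact_mod_cast hn0
  have htR : (0:ℝ) < t := by exact_mod_cast ht
  have hCna : (0:ℝ) < (n.choose α : ℝ) := by exact_mod_cast Nat.choose_pos hαn
  -- per-replica bound
  have hkey : ∀ j : Fin n,
      ((((Finset.univ : Finset (Fin n)).powersetCard α).filter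
          (fun I => t ≤ (S j ∩ I).card)).card : ℝ)
        ≤ (n.choose α : ℝ) / (n : ℝ) ^ 2 := by
    intro j
    rcases le_or_gt t α with hta | hta
    · have hb : ((((Finset.univ : Finset (Fin n)).powersetCard α).filter
            (fun I => t ≤ (S j ∩ I).card)).card : ℝ)
          ≤ ((S j).card.choose t : ℝ) * ((n - t).choose (α - t) : ℝ) := by
        exact_mod_cast aux_bad_card_le (t := t) (α := α) (S j)
      have hk := aux_key n t α ((S j).card) ht hta hαn hn0
      have hratio : (((S j).card : ℝ) * (α : ℝ) * Real.exp 1) / ((t : ℝ) * (n : ℝ)) ≤ 1 / 2 := by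
        refine le_trans ?_ hsmall
        gcongr
        exact hS j
      have hpowle : ((((S j).card : ℝ) * (α : ℝ) * Real.exp 1) / ((t : ℝ) * (n : ℝ))) ^ t
          ≤ ((1:ℝ)/2) ^ t := by
        apply pow_le_pow_left₀ (by positivity) hratio
      calc ((((Finset.univ : Finset (Fin n)).powersetCard α).filter
            (fun I => t ≤ (S j ∩ I).card)).card : ℝ)
          ≤ (n.choose α : ℝ) * ((((S j).card : ℝ) * (α : ℝ) * Real.exp 1)
              / ((t : ℝ) * (n : ℝ))) ^ t := le_trans hb hk
        _ ≤ (n.choose α : ℝ) * ((1:ℝ)/2) ^ t :=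
            mul_le_mul_of_nonneg_left hpowle (by positivity)
        _ ≤ (n.choose α : ℝ) * (1 / (n:ℝ)^2) :=
            mul_le_mul_of_nonneg_left (aux_half_pow n t hn hlog) (by positivity)
        _ = (n.choose α : ℝ) / (n : ℝ) ^ 2 := by ring
    · have hempty : ((Finset.univ : Finset (Fin n)).powersetCard α).filter
            (fun I => t ≤ (S j ∩ I).card) = ∅ := by
        rw [filter_eq_empty_iff]
        intro I hI
        have h1 : (S j ∩ I).card ≤ I.card := card_le_card inter_subset_right
        have h2 : I.card = α := (mem_powersetCard.mp hI).2
        omega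
      rw [hempty]
      simp only [card_empty, Nat.cast_zero]
      positivity
  -- union bound
  have hPcard : ((Finset.univ : Finset (Fin n)).powersetCard α).card = n.choose α := by
    rw [card_powersetCard, card_univ, Fintype.card_fin]
  have hsplit := card_filter_add_card_filter_not
    (s := (Finset.univ : Finset (Fin n)).powersetCard α)
    (p := fun I => ∀ j : Fin n, (S j ∩ I).card < t)
  have hbadsub : ((Finset.univ : Finset (Fin n)).powersetCard α).filter
        (fun I => ¬ ∀ j : Fin n, (S j ∩ I).card < t)
      ⊆ Finset.univ.biUnion (fun j : Fin n =>
          ((Finset.univ : Finset (Fin n)).powersetCard α).filter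
            (fun I => t ≤ (S j ∩ I).card)) := by
    intro I hI
    simp only [mem_filter, not_forall, not_lt] at hI
    obtain ⟨hIP, j, hj⟩ := hI
    simp only [mem_biUnion, mem_filter]
    exact ⟨j, mem_univ j, hIP, hj⟩
  have hbadcard : ((((Finset.univ : Finset (Fin n)).powersetCard α).filter
        (fun I => ¬ ∀ j : Fin n, (S j ∩ I).card < t)).card : ℝ)
      ≤ (n.choose α : ℝ) / n := by
    have h1 : (((Finset.univ : Finset (Fin n)).powersetCard α).filter
          (fun I => ¬ ∀ j : Fin n, (S j ∩ I).card < t)).card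
        ≤ ∑ j : Fin n, (((Finset.univ : Finset (Fin n)).powersetCard α).filter
            (fun I => t ≤ (S j ∩ I).card)).card :=
      le_trans (card_le_card hbadsub) card_biUnion_le
    calc ((((Finset.univ : Finset (Fin n)).powersetCard α).filter
          (fun I => ¬ ∀ j : Fin n, (S j ∩ I).card < t)).card : ℝ)
        ≤ ∑ j : Fin n, ((((Finset.univ : Finset (Fin n)).powersetCard α).filter
            (fun I => t ≤ (S j ∩ I).card)).card : ℝ) := by exact_mod_cast h1
      _ ≤ ∑ _j : Fin n, (n.choose α : ℝ) / (n : ℝ) ^ 2 := sum_le_sum fun j _ => hkey j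
      _ = (n : ℝ) * ((n.choose α : ℝ) / (n : ℝ) ^ 2) := by
          rw [sum_const, card_univ, Fintype.card_fin, nsmul_eq_mul]
      _ = (n.choose α : ℝ) / n := by field_simp
  have hgoodR : (n.choose α : ℝ) - (n.choose α : ℝ) / n
      ≤ ((((Finset.univ : Finset (Fin n)).powersetCard α).filter
          (fun I => ∀ j : Fin n, (S j ∩ I).card < t)).card : ℝ) := by
    have hsplit' : ((((Finset.univ : Finset (Fin n)).powersetCard α).filter
          (fun I => ∀ j : Fin n, (S j ∩ I).card < t)).card : ℝ)
        + ((((Finset.univ : Finset (Fin n)).powersetCard α).filter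
          (fun I => ¬ ∀ j : Fin n, (S j ∩ I).card < t)).card : ℝ) = (n.choose α : ℝ) := by
      rw [← hPcard]
      exact_mod_cast hsplit
    linarith [hbadcard]
  constructor
  · rw [le_div_iff₀ hCna]
    have : (1 - 1 / (n:ℝ)) * (n.choose α : ℝ)
        = (n.choose α : ℝ) - (n.choose α : ℝ) / n := by field_simp
    rw [this]
    exact hgoodR
  · have h12 : 1 / (n : ℝ) ≤ 1 / 2 := by
      apply one_div_le_one_div_of_le (by norm_num)
      exact_mod_cast hn
    have hpos : (0:ℝ) < ((((Finset.univ : Finset (Fin n)).powersetCard α).filter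
          (fun I => ∀ j : Fin n, (S j ∩ I).card < t)).card : ℝ) := by
      have : (n.choose α : ℝ) / n = (n.choose α : ℝ) * (1 / n) := by ring
      nlinarith [hgoodR, hCna, h12]
    have hpos' : 0 < (((Finset.univ : Finset (Fin n)).powersetCard α).filter
          (fun I => ∀ j : Fin n, (S j ∩ I).card < t)).card := by exact_mod_cast hpos
    obtain ⟨I, hI⟩ := card_pos.mp hpos'
    rw [mem_filter] at hI
    exact ⟨I, (mem_powersetCard.mp hI.1).2, hI.2⟩
end
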